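/- Let G be a chordal graph and K a complete subgraph of G with K ≠ G. Then there exists a vertex x of G not in K such that the subgraph of G induced on the neighbor set N(x) of x is a complete subgraph; consequently the induced subgraph on N(x) ∪ {x} is complete. -/

import Mathlib

open MvPolynomial

section Defs

variable (k : Type*) [Field k] (σ : Type*)

/-- A set of vertices is a vertex cover if it meets every edge. -/
def SimpleGraph.IsVertexCover' {V : Type*} (G : SimpleGraph V) (S : Set V) : Prop :=
  ∀ ⦃x y : V⦄, G.Adj x y → x ∈ S ∨ y ∈ S

/-- A minimal vertex cover: a vertex cover no proper subset of which is a cover. -/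
def SimpleGraph.IsMinimalVertexCover {V : Type*} (G : SimpleGraph V) (S : Set V) : Prop :=
  G.IsVertexCover' S ∧ ∀ T ⊆ S, G.IsVertexCover' T → T = S

/-- A graph is chordal if every cycle of length `> 3` has a chord. -/
def SimpleGraph.IsChordal {V : Type*} (G : SimpleGraph V) : Prop :=
  ∀ ⦃v : V⦄ (w : G.Walk v v), w.IsCycle → 3 < w.length →
    ∃ x y : V, x ∈ w.support ∧ y ∈ w.support ∧ G.Adj x y ∧ s(x, y) ∉ w.edges

/-- Delete a set of vertices (keep the same vertex type, remove all incident edges). -/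
def SimpleGraph.deleteVerts' {V : Type*} (G : SimpleGraph V) (S : Set V) : SimpleGraph V where
  Adj a b := G.Adj a b ∧ a ∉ S ∧ b ∉ S
  symm := ⟨fun a b h => ⟨h.1.symm, h.2.2, h.2.1⟩⟩
  loopless := ⟨fun a h => G.loopless.irrefl a h.1⟩

/-- The edge ideal of a graph. -/
noncomputable def edgeIdeal {V : Type*} (G : SimpleGraph V) : Ideal (MvPolynomial V k) :=
  Ideal.span {m | ∃ i j : V, G.Adj i j ∧ m = X i * X j}

/-- The squarefree Alexander dual of the edge ideal:
the intersection of the primes `(x_i, x_j)` over the edges of `G`. -/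
noncomputable def alexanderDual {V : Type*} (G : SimpleGraph V) : Ideal (MvPolynomial V k) :=
  ⨅ (i : V) (j : V) (_ : G.Adj i j), Ideal.span {X i, X j}

/-- `I_[d]`: the ideal generated by the squarefree monomials of degree `d` lying in `I`. -/
noncomputable def sqfreeComponent {V : Type*} (I : Ideal (MvPolynomial V k)) (d : ℕ) :
    Ideal (MvPolynomial V k) :=
  Ideal.span {m | ∃ S : Finset V, S.card = d ∧ (∏ i ∈ S, X i) ∈ I ∧ m = ∏ i ∈ S, (X i : MvPolynomial V k)}

/-- `(I_d)`: the ideal generated by the homogeneous degree-`d` elements of `I`. -/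
noncomputable def degreeComponent {V : Type*} (I : Ideal (MvPolynomial V k)) (d : ℕ) :
    Ideal (MvPolynomial V k) :=
  Ideal.span ((I : Set (MvPolynomial V k)) ∩ (homogeneousSubmodule V k d : Set (MvPolynomial V k)))

/-- `I` has a linear resolution in degree `d`: there is a (necessarily minimal) graded free
resolution of `I` whose `i`-th free module is generated in degree `d + i`; equivalently all the
matrix entries of the differentials are homogeneous of degree `1`, so that
`β_{i,j}(I) = 0` for `j ≠ i + d`. -/
def HasLinearResolution {V : Type*} (d : ℕ) (I : Ideal (MvPolynomial V k)) : Prop :=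
  ∃ (b : ℕ → ℕ)
    (g : (Fin (b 0) →₀ MvPolynomial V k) →ₗ[MvPolynomial V k] MvPolynomial V k)
    (f : ∀ i : ℕ, (Fin (b (i+1)) →₀ MvPolynomial V k) →ₗ[MvPolynomial V k]
        (Fin (b i) →₀ MvPolynomial V k)),
    (∀ j, g (Finsupp.single j 1) ∈ homogeneousSubmodule V k d) ∧
    LinearMap.range g = I ∧
    (∀ i j l, (f i (Finsupp.single j 1)) l ∈ homogeneousSubmodule V k 1) ∧
    LinearMap.ker g = LinearMap.range (f 0) ∧
    (∀ i, LinearMap.ker (f i) = LinearMap.range (f (i+1)))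

/-- A homogeneous ideal is componentwise linear if each `(I_d)` has a linear resolution. -/
def ComponentwiseLinear {V : Type*} (I : Ideal (MvPolynomial V k)) : Prop :=
  ∀ d : ℕ, HasLinearResolution k d (degreeComponent k I d)

/-- A monomial ideal has linear quotients if its minimal generators can be listed with
nondecreasing degrees so that each successive colon ideal is generated by variables. -/
def HasLinearQuotients {V : Type*} (I : Ideal (MvPolynomial V k)) : Prop :=
  ∃ (m : ℕ) (u : Fin m → MvPolynomial V k),
    (∀ i, ∃ s : V →₀ ℕ, u i = monomial s (1 : k)) ∧
    I = Ideal.span (Set.range u) ∧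
    (∀ i j : Fin m, i ≤ j → (u i).totalDegree ≤ (u j).totalDegree) ∧
    (∀ i : Fin m, 0 < (i : ℕ) →
      ∃ s : Set V,
        Submodule.colon (Ideal.span (u '' {j | j < i})) (Ideal.span {u i})
          = Ideal.span (MvPolynomial.X '' s))

/-- The irrelevant (graded) maximal ideal of the polynomial ring. -/
noncomputable def maxIdeal : Ideal (MvPolynomial σ k) :=
  Ideal.span (Set.range (X : σ → MvPolynomial σ k))

/-- `rs` is an `M`-regular sequence: each term is a nonzerodivisor modulo the previous ones,
and the sequence does not generate everything. -/
def IsRegularSeq (R M : Type*) [CommRing R] [AddCommGroup M] [Module R M]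
    (rs : List R) : Prop :=
  (∀ (i : ℕ) (h : i < rs.length) (x : M),
      rs.get ⟨i, h⟩ • x ∈ (Ideal.span {r | r ∈ rs.take i}) • (⊤ : Submodule R M) →
        x ∈ (Ideal.span {r | r ∈ rs.take i}) • (⊤ : Submodule R M)) ∧
  (Ideal.span {r | r ∈ rs}) • (⊤ : Submodule R M) ≠ ⊤

/-- The depth of `M` with respect to the ideal `m`: the supremum of the lengths of
`M`-regular sequences with entries in `m`. -/
noncomputable def moduleDepth (R M : Type*) [CommRing R] [AddCommGroup M] [Module R M]
    (m : Ideal R) : ℕ :=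
  sSup {d : ℕ | ∃ rs : List R, rs.length = d ∧ (∀ r ∈ rs, r ∈ m) ∧ IsRegularSeq R M rs}

/-- The Krull dimension of a module: the dimension of `R` modulo the annihilator. -/
noncomputable def moduleDim (R M : Type*) [CommRing R] [AddCommGroup M] [Module R M] :
    WithBot (WithTop ℕ) :=
  ringKrullDim (R ⧸ Module.annihilator R M)

/-- `M` is a (nonzero) Cohen-Macaulay module: depth equals Krull dimension. -/
def IsCMModule (R M : Type*) [CommRing R] [AddCommGroup M] [Module R M] (m : Ideal R) : Prop :=
  Nontrivial M ∧ (moduleDepth R M m : WithBot (WithTop ℕ)) = moduleDim R M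

/-- `R/I` is Cohen-Macaulay. -/
def QuotientIsCM {V : Type*} (I : Ideal (MvPolynomial V k)) : Prop :=
  (moduleDepth (MvPolynomial V k) (MvPolynomial V k ⧸ I) (maxIdeal k V) : WithBot (WithTop ℕ))
    = ringKrullDim (MvPolynomial V k ⧸ I)

/-- `R/I` is sequentially Cohen-Macaulay: there is a filtration
`0 = M₀ ⊂ M₁ ⊂ ⋯ ⊂ M_r = R/I` whose successive quotients are Cohen-Macaulay of strictly
increasing Krull dimension. -/
def SequentiallyCM {V : Type*} (I : Ideal (MvPolynomial V k)) : Prop :=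
  ∃ (r : ℕ) (N : Fin (r+1) → Submodule (MvPolynomial V k) (MvPolynomial V k ⧸ I)),
    Monotone N ∧ N 0 = ⊥ ∧ N (Fin.last r) = ⊤ ∧
    (∀ i : Fin r,
      IsCMModule (MvPolynomial V k)
        (N i.succ ⧸ Submodule.comap (N i.succ).subtype (N i.castSucc)) (maxIdeal k V)) ∧
    StrictMono (fun i : Fin r =>
      moduleDim (MvPolynomial V k)
        (N i.succ ⧸ Submodule.comap (N i.succ).subtype (N i.castSucc)))

/-- `I` is a squarefree monomial ideal. -/
def IsSquarefreeMonomialIdeal {V : Type*} (I : Ideal (MvPolynomial V k)) : Prop :=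
  ∃ F : Set (Finset V), I = Ideal.span {m | ∃ S ∈ F, m = ∏ i ∈ S, (X i : MvPolynomial V k)}

/-- `I` is unmixed: all its minimal primes have the same height (equivalently, here,
the same codimension/coheight). -/
def IsUnmixed {R : Type*} [CommRing R] (I : Ideal R) : Prop :=
  ∀ P ∈ I.minimalPrimes, ∀ Q ∈ I.minimalPrimes,
    ringKrullDim (R ⧸ P) = ringKrullDim (R ⧸ Q)

/-- The cycle graph on `ZMod n`. -/
def cycleGraph (n : ℕ) : SimpleGraph (ZMod n) :=
  SimpleGraph.fromEdgeSet {e | ∃ i : ZMod n, e = s(i, i + 1)}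

end Defs


section ChordalAux

open SimpleGraph

set_option linter.unusedVariables false

variable {V : Type*}



/-- Induced subgraph on a vertex set, on the same vertex type. -/
private def Gr (G : SimpleGraph V) (s : Set V) : SimpleGraph V where
  Adj a b := G.Adj a b ∧ a ∈ s ∧ b ∈ s
  symm := ⟨fun a b h => ⟨h.1.symm, h.2.2, h.2.1⟩⟩
  loopless := ⟨fun a h => G.loopless.irrefl a h.1⟩

private lemma gr_le (G : SimpleGraph V) (s : Set V) : Gr G s ≤ G := fun _ _ h => h.1

private lemma gr_support_mem {G : SimpleGraph V} {s : Set V} {x y : V}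
    (w : (Gr G s).Walk x y) (hx : x ∈ s) : ∀ z ∈ w.support, z ∈ s := by
  induction w with
  | nil => intro z hz; rw [SimpleGraph.Walk.support_nil, List.mem_singleton] at hz; exact hz ▸ hx
  | cons h p ih =>
    intro z hz
    rw [SimpleGraph.Walk.support_cons, List.mem_cons] at hz
    rcases hz with rfl | hz
    · exact hx
    · exact ih h.2.2 z hz

private lemma walk_support_closed {H : SimpleGraph V} {A : Set V}
    (hcl : ∀ x ∈ A, ∀ y, H.Adj x y → y ∈ A) {x y : V} (w : H.Walk x y) (hx : x ∈ A) :
    ∀ z ∈ w.support, z ∈ A := by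
  induction w with
  | nil => intro z hz; rw [SimpleGraph.Walk.support_nil, List.mem_singleton] at hz; exact hz ▸ hx
  | cons h p ih =>
    intro z hz
    rw [SimpleGraph.Walk.support_cons, List.mem_cons] at hz
    rcases hz with rfl | hz
    · exact hx
    · exact ih (hcl _ hx _ h) z hz

private lemma shortest_adj {H : SimpleGraph V} {x y : V} : ∀ {u v : V}
    (p : H.Walk u v), (∀ q : H.Walk u v, p.length ≤ q.length) →
    x ∈ p.support → y ∈ p.support → H.Adj x y → s(x, y) ∈ p.edges := by
  classical
  intro u v p
  induction p with
  | nil =>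
    intro _ hx hy hxy
    rw [SimpleGraph.Walk.support_nil, List.mem_singleton] at hx hy
    subst hx; subst hy
    exact absurd hxy (H.loopless.irrefl _)
  | @cons u w v h q ih =>
    intro hmin hx hy hxy
    have key : ∀ z (hz : z ∈ q.support), H.Adj u z →
        s(u, z) ∈ (SimpleGraph.Walk.cons h q).edges := by
      intro z hz hadj
      have hspec := q.take_spec hz
      have hlen := hmin (SimpleGraph.Walk.cons hadj (q.dropUntil z hz))
      rw [SimpleGraph.Walk.length_cons, SimpleGraph.Walk.length_cons] at hlen
      have hq : q.length = (q.takeUntil z hz).length + (q.dropUntil z hz).length := by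
        conv_lhs => rw [← hspec]
        exact SimpleGraph.Walk.length_append _ _
      have h0 : (q.takeUntil z hz).length = 0 := by omega
      have hwz : w = z := SimpleGraph.Walk.eq_of_length_eq_zero h0
      subst hwz
      rw [SimpleGraph.Walk.edges_cons]
      exact List.mem_cons_self
    have hqmin : ∀ q' : H.Walk w v, q.length ≤ q'.length := by
      intro q'
      have := hmin (SimpleGraph.Walk.cons h q')
      rw [SimpleGraph.Walk.length_cons, SimpleGraph.Walk.length_cons] at this
      omega
    rw [SimpleGraph.Walk.support_cons, List.mem_cons] at hx hy
    rcases hx with rfl | hxq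
    · rcases hy with rfl | hyq
      · exact absurd hxy (H.loopless.irrefl _)
      · exact key y hyq hxy
    · rcases hy with rfl | hyq
      · rw [Sym2.eq_swap]
        exact key x hxq hxy.symm
      · rw [SimpleGraph.Walk.edges_cons]
        exact List.mem_cons_of_mem _ (ih hqmin hxq hyq hxy)

private lemma reach_insert {G : SimpleGraph V} {s : Set V} {u a c : V}
    (hu : u ∉ s) (ha : a ∈ s)
    (hno : ∀ y ∈ s, (Gr G s).Reachable a y → ¬G.Adj u y)
    (hr : (Gr G (insert u s)).Reachable a c) : (Gr G s).Reachable a c := by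
  classical
  obtain ⟨w⟩ := hr
  by_cases husup : u ∈ w.support
  · exfalso
    have hau : a ≠ u := fun h => hu (h ▸ ha)
    set q := w.takeUntil u husup with hqdef
    have hcount : q.support.count u = 1 := w.count_support_takeUntil_eq_one husup
    have hqnn : ¬ q.reverse.Nil := by
      rw [SimpleGraph.Walk.nil_iff_length_eq, SimpleGraph.Walk.length_reverse]
      intro h0
      exact hau (SimpleGraph.Walk.eq_of_length_eq_zero h0)
    obtain ⟨d, e, q'', hq''⟩ := SimpleGraph.Walk.not_nil_iff.mp hqnn
    have hsupp : q.support.reverse = u :: q''.support := by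
      rw [← SimpleGraph.Walk.support_reverse, hq'', SimpleGraph.Walk.support_cons]
    have hucount : q''.support.count u = 0 := by
      have := hcount
      rw [← List.count_reverse, hsupp, List.count_cons_self] at this
      omega
    have hunot : u ∉ q''.support := by
      rw [← List.count_pos_iff] at *
      omega
    have htr : ∀ ee ∈ q''.edges, ee ∈ (Gr G s).edgeSet := by
      intro ee hee
      revert hee
      refine ee.ind ?_
      intro x y hee
      have hadj : (Gr G (insert u s)).Adj x y :=
        (SimpleGraph.mem_edgeSet _).mp (q''.edges_subset_edgeSet hee)
      have hxs : x ∈ q''.support := q''.fst_mem_support_of_mem_edges hee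
      have hys : y ∈ q''.support := q''.snd_mem_support_of_mem_edges hee
      have hx : x ∈ s := by
        rcases hadj.2.1 with rfl | h
        · exact absurd hxs hunot
        · exact h
      have hy : y ∈ s := by
        rcases hadj.2.2 with rfl | h
        · exact absurd hys hunot
        · exact h
      exact (SimpleGraph.mem_edgeSet _).mpr ⟨hadj.1, hx, hy⟩
    have hd : d ∈ s := by
      rcases e.2.2 with rfl | h
      · exact absurd rfl e.ne
      · exact h
    have hreach : (Gr G s).Reachable a d := by
      have hwalk : (Gr G s).Walk d a := q''.transfer (Gr G s) htr
      exact hwalk.reverse.reachable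
    exact hno d hd hreach e.1
  · have htr : ∀ ee ∈ w.edges, ee ∈ (Gr G s).edgeSet := by
      intro ee hee
      revert hee
      refine ee.ind ?_
      intro x y hee
      have hadj : (Gr G (insert u s)).Adj x y :=
        (SimpleGraph.mem_edgeSet _).mp (w.edges_subset_edgeSet hee)
      have hxs : x ∈ w.support := w.fst_mem_support_of_mem_edges hee
      have hys : y ∈ w.support := w.snd_mem_support_of_mem_edges hee
      have hx : x ∈ s := by
        rcases hadj.2.1 with rfl | h
        · exact absurd hxs husup
        · exact h
      have hy : y ∈ s := by
        rcases hadj.2.2 with rfl | h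
        · exact absurd hys husup
        · exact h
      exact (SimpleGraph.mem_edgeSet _).mpr ⟨hadj.1, hx, hy⟩
    exact ⟨w.transfer (Gr G s) htr⟩

private lemma mkpath {G : SimpleGraph V} {t' : Set V} (u v : V) (huv : u ≠ v)
    (hnuv : ¬G.Adj u v) (A : Set V)
    (hconn : ∀ x ∈ A, ∀ y ∈ A, (Gr G t').Reachable x y)
    (hcl : ∀ x ∈ A, ∀ y, (Gr G t').Adj x y → y ∈ A)
    (ya za : V) (hya : ya ∈ A) (hza : za ∈ A)
    (hadjU : G.Adj u ya) (hadjV : G.Adj v za) :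
    ∃ p : (Gr G (insert u (insert v A))).Walk u v, p.IsPath ∧
      (∀ x y, x ∈ p.support → y ∈ p.support → G.Adj x y → s(x, y) ∈ p.edges) ∧
      2 ≤ p.length ∧ ∀ z ∈ p.support, z = u ∨ z = v ∨ z ∈ A := by
  classical
  set s : Set V := insert u (insert v A) with hs
  have hmemA : ∀ z ∈ A, z ∈ s := fun z hz => Set.mem_insert_of_mem _ (Set.mem_insert_of_mem _ hz)
  have hus : u ∈ s := Set.mem_insert _ _
  have hvs : v ∈ s := Set.mem_insert_of_mem _ (Set.mem_insert _ _)
  -- a walk from ya to za inside A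
  obtain ⟨w0⟩ := hconn ya hya za hza
  have hw0sup : ∀ z ∈ w0.support, z ∈ A :=
    walk_support_closed (fun x hx y h => hcl x hx y h) w0 hya
  have htr : ∀ ee ∈ w0.edges, ee ∈ (Gr G s).edgeSet := by
    intro ee hee
    revert hee
    refine ee.ind ?_
    intro x y hee
    have hadj : (Gr G t').Adj x y := (SimpleGraph.mem_edgeSet _).mp (w0.edges_subset_edgeSet hee)
    have hxs : x ∈ A := hw0sup x (w0.fst_mem_support_of_mem_edges hee)
    have hys : y ∈ A := hw0sup y (w0.snd_mem_support_of_mem_edges hee)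
    exact (SimpleGraph.mem_edgeSet _).mpr ⟨hadj.1, hmemA x hxs, hmemA y hys⟩
  have w1 : (Gr G s).Walk ya za := w0.transfer _ htr
  have e1 : (Gr G s).Adj u ya := ⟨hadjU, hus, hmemA _ hya⟩
  have e2 : (Gr G s).Adj za v := ⟨hadjV.symm, hmemA _ hza, hvs⟩
  have W : (Gr G s).Walk u v := SimpleGraph.Walk.cons e1 (w1.concat e2)
  -- shortest walk
  have hLne : (Set.range fun q : (Gr G s).Walk u v => q.length).Nonempty := ⟨W.length, W, rfl⟩
  obtain ⟨q0, hq0⟩ := Nat.sInf_mem hLne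
  have hq0min : ∀ q : (Gr G s).Walk u v, q0.length ≤ q.length := by
    intro q
    exact le_trans (le_of_eq hq0) (Nat.sInf_le ⟨q, rfl⟩)
  set p : (Gr G s).Walk u v := q0.bypass with hp
  have hpmin : ∀ q : (Gr G s).Walk u v, p.length ≤ q.length := fun q =>
    le_trans q0.length_bypass_le (hq0min q)
  have hpsup : ∀ z ∈ p.support, z ∈ s := gr_support_mem p hus
  have hclass : ∀ z ∈ p.support, z = u ∨ z = v ∨ z ∈ A := by
    intro z hz
    rcases hpsup z hz with rfl | h
    · exact Or.inl rfl
    · rcases h with rfl | h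
      · exact Or.inr (Or.inl rfl)
      · exact Or.inr (Or.inr h)
  refine ⟨p, q0.bypass_isPath, ?_, ?_, hclass⟩
  · intro x y hx hy hadj
    exact shortest_adj p hpmin hx hy ⟨hadj, hpsup x hx, hpsup y hy⟩
  · rcases Nat.lt_or_ge p.length 2 with hlt | hge
    · exfalso
      interval_cases h : p.length
      · exact huv (SimpleGraph.Walk.eq_of_length_eq_zero h)
      · exact hnuv (SimpleGraph.Walk.adj_of_length_eq_one h).1
    · exact hge

private lemma main_ind {V : Type*} [Fintype V] (G : SimpleGraph V) (hG : G.IsChordal) :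
    ∀ n : ℕ, ∀ t : Set V, t.ncard ≤ n → ∀ K : Set V, K ⊆ t →
      (∀ y ∈ K, ∀ z ∈ K, y ≠ z → G.Adj y z) → K ≠ t →
      ∃ x ∈ t, x ∉ K ∧
        ∀ y z : V, G.Adj x y → y ∈ t → G.Adj x z → z ∈ t → y ≠ z → G.Adj y z := by
  classical
  intro n
  induction n with
  | zero =>
    intro t ht K hKt _ hKne
    exfalso
    have ht0 : t = ∅ := (Set.ncard_eq_zero (Set.toFinite t)).mp (Nat.le_zero.mp ht)
    apply hKne
    rw [ht0] at hKt ⊢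
    exact Set.subset_empty_iff.mp hKt
  | succ n IH =>
    intro t ht K hKt hKcl hKne
    obtain ⟨x₀, hx₀t, hx₀K⟩ := Set.exists_of_ssubset (HasSubset.Subset.ssubset_of_ne hKt hKne)
    by_cases hcomp : ∀ y ∈ t, ∀ z ∈ t, y ≠ z → G.Adj y z
    · exact ⟨x₀, hx₀t, hx₀K, fun y z _ hyt _ hzt hyz => hcomp y hyt z hzt hyz⟩
    push_neg at hcomp
    obtain ⟨a, hat, b, hbt, hab, hnadj⟩ := hcomp
    -- a trivial separator
    have hsep0 : (t \ {a, b}) ⊆ t \ {a, b} ∧ ¬(Gr G (t \ (t \ {a, b}))).Reachable a b := by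
      refine ⟨subset_rfl, ?_⟩
      rintro ⟨w⟩
      cases w with
      | nil => exact hab rfl
      | cons h q =>
        rename_i c
        have hc := h.2.2
        have hcm : c ∈ ({a, b} : Set V) := by
          by_contra hcc
          exact hc.2 ⟨hc.1, hcc⟩
        rcases hcm with rfl | hcm
        · exact G.loopless.irrefl _ h.1
        · rw [Set.mem_singleton_iff] at hcm
          subst hcm
          exact hnadj h.1
    -- minimal separator
    have hPne : (Set.range fun Sp : {S : Set V //
        S ⊆ t \ {a, b} ∧ ¬(Gr G (t \ S)).Reachable a b} => Sp.1.ncard).Nonempty :=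
      ⟨_, ⟨_, hsep0⟩, rfl⟩
    obtain ⟨⟨S, hS⟩, hScard⟩ := Nat.sInf_mem hPne
    have hmin : ∀ S' : Set V, S' ⊆ t \ {a, b} → ¬(Gr G (t \ S')).Reachable a b →
        S.ncard ≤ S'.ncard := by
      intro S' h1 h2
      exact le_trans (le_of_eq hScard) (Nat.sInf_le ⟨⟨S', h1, h2⟩, rfl⟩)
    have hSt : S ⊆ t := fun x hx => (hS.1 hx).1
    have haS : a ∉ S := fun h => (hS.1 h).2 (Set.mem_insert _ _)
    have hbS : b ∉ S := fun h => (hS.1 h).2 (Set.mem_insert_of_mem _ rfl)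
    have hat' : a ∈ t \ S := ⟨hat, haS⟩
    have hbt' : b ∈ t \ S := ⟨hbt, hbS⟩
    set t' : Set V := t \ S with ht'
    set A : Set V := {v | v ∈ t' ∧ (Gr G t').Reachable a v} with hA
    set B : Set V := {v | v ∈ t' ∧ (Gr G t').Reachable b v} with hB
    have hSr := hS.2
    have haA : a ∈ A := ⟨hat', SimpleGraph.Reachable.refl a⟩
    have hbB : b ∈ B := ⟨hbt', SimpleGraph.Reachable.refl b⟩
    have hAB : ∀ z, z ∈ A → z ∈ B → False := fun z hza hzb => hSr (hza.2.trans hzb.2.symm)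
    have hAt' : ∀ z ∈ A, z ∈ t' := fun z hz => hz.1
    have hBt' : ∀ z ∈ B, z ∈ t' := fun z hz => hz.1
    have hAcl : ∀ x ∈ A, ∀ y, (Gr G t').Adj x y → y ∈ A :=
      fun x hx y h => ⟨h.2.2, hx.2.trans h.reachable⟩
    have hBcl : ∀ x ∈ B, ∀ y, (Gr G t').Adj x y → y ∈ B :=
      fun x hx y h => ⟨h.2.2, hx.2.trans h.reachable⟩
    have hAconn : ∀ x ∈ A, ∀ y ∈ A, (Gr G t').Reachable x y :=
      fun x hx y hy => hx.2.symm.trans hy.2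
    have hBconn : ∀ x ∈ B, ∀ y ∈ B, (Gr G t').Reachable x y :=
      fun x hx y hy => hx.2.symm.trans hy.2
    -- every separator vertex has neighbors in both components
    have hnbr : ∀ u ∈ S, (∃ y ∈ A, G.Adj u y) ∧ (∃ y ∈ B, G.Adj u y) := by
      intro u huS
      have hut : u ∈ t := hSt huS
      have hut' : u ∉ t' := fun h => h.2 huS
      have hins : insert u t' = t \ (S \ {u}) := by
        ext z
        simp only [Set.mem_insert_iff, Set.mem_diff, Set.mem_singleton_iff, ht']
        constructor
        · rintro (rfl | ⟨hzt, hzS⟩)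
          · exact ⟨hut, fun h => h.2 rfl⟩
          · exact ⟨hzt, fun h => hzS h.1⟩
        · rintro ⟨hzt, hz⟩
          by_cases hzS : z ∈ S
          · left
            by_contra hzu
            exact hz ⟨hzS, hzu⟩
          · right; exact ⟨hzt, hzS⟩
      have hsmall : (S \ {u}).ncard < S.ncard :=
        Set.ncard_diff_singleton_lt_of_mem huS (Set.toFinite S)
      have hreach : (Gr G (insert u t')).Reachable a b := by
        by_contra hnr
        have := hmin (S \ {u}) (fun x hx => hS.1 hx.1) (by rw [← hins]; exact hnr)
        omega
      constructor
      · by_contra hno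
        push_neg at hno
        exact hSr (reach_insert hut' hat' (fun y hy hr hadj => hno y ⟨hy, hr⟩ hadj) hreach)
      · by_contra hno
        push_neg at hno
        exact hSr
          ((reach_insert hut' hbt' (fun y hy hr hadj => hno y ⟨hy, hr⟩ hadj) hreach.symm).symm)
    -- the separator is a clique
    have hSclq : ∀ u ∈ S, ∀ v ∈ S, u ≠ v → G.Adj u v := by
      intro u huS v hvS huv
      by_contra hnuv
      have huA : u ∉ A := fun h => h.1.2 huS
      have hvA : v ∉ A := fun h => h.1.2 hvS
      have huB : u ∉ B := fun h => h.1.2 huS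
      have hvB : v ∉ B := fun h => h.1.2 hvS
      obtain ⟨⟨ya, hya, hadjuya⟩, ⟨yb, hyb, hadjuyb⟩⟩ := hnbr u huS
      obtain ⟨⟨za, hza, hadjvza⟩, ⟨zb, hzb, hadjvzb⟩⟩ := hnbr v hvS
      obtain ⟨pA, hpA, hchordA, hlenA, hclassA⟩ :=
        mkpath u v huv hnuv A hAconn hAcl ya za hya hza hadjuya hadjvza
      obtain ⟨pB, hpB, hchordB, hlenB, hclassB⟩ :=
        mkpath v u huv.symm (fun h => hnuv h.symm) B hBconn hBcl zb yb hzb hyb hadjvzb hadjuyb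
      have htrA : ∀ e ∈ pA.edges, e ∈ G.edgeSet :=
        fun e he => SimpleGraph.edgeSet_mono (gr_le G _) (pA.edges_subset_edgeSet he)
      have htrB : ∀ e ∈ pB.edges, e ∈ G.edgeSet :=
        fun e he => SimpleGraph.edgeSet_mono (gr_le G _) (pB.edges_subset_edgeSet he)
      set pA' : G.Walk u v := pA.transfer G htrA with hpA'
      set pB' : G.Walk v u := pB.transfer G htrB with hpB'
      have hsupA : pA'.support = pA.support := pA.support_transfer _
      have hsupB : pB'.support = pB.support := pB.support_transfer _
      have hedA : pA'.edges = pA.edges := pA.edges_transfer _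
      have hedB : pB'.edges = pB.edges := pB.edges_transfer _
      have hlA : pA'.length = pA.length := pA.length_transfer _
      have hlB : pB'.length = pB.length := pB.length_transfer _
      set C : G.Walk u u := pA'.append pB' with hC
      have hCedges : C.edges = pA.edges ++ pB.edges := by
        rw [hC, SimpleGraph.Walk.edges_append, hedA, hedB]
      have hClen : 3 < C.length := by
        rw [hC, SimpleGraph.Walk.length_append, hlA, hlB]; omega
      have hCsup : ∀ z, z ∈ C.support → z ∈ pA.support ∨ z ∈ pB.support := by
        intro z hz
        rw [hC] at hz
        rcases (SimpleGraph.Walk.mem_support_append_iff _ _).mp hz with h | h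
        · left; rwa [hsupA] at h
        · right; rwa [hsupB] at h
      -- nodup facts
      have hndA : (u :: pA.support.tail).Nodup := by
        rw [← SimpleGraph.Walk.support_eq_cons]; exact hpA.support_nodup
      have hndB : (v :: pB.support.tail).Nodup := by
        rw [← SimpleGraph.Walk.support_eq_cons]; exact hpB.support_nodup
      have hutailA : u ∉ pA.support.tail := (List.nodup_cons.mp hndA).1
      have hvtailB : v ∉ pB.support.tail := (List.nodup_cons.mp hndB).1
      have hCcyc : C.IsCycle := by
        refine ⟨⟨⟨?_⟩, ?_⟩, ?_⟩
        · -- edges nodup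
          rw [hCedges, List.nodup_append]
          refine ⟨hpA.isTrail.edges_nodup, hpB.isTrail.edges_nodup, ?_⟩
          have hdisj : ∀ x y : V, s(x, y) ∈ pA.edges → s(x, y) ∈ pB.edges → False := by
            intro x y hxA hxB
            have hGxy : (Gr G (insert u (insert v A))).Adj x y :=
              (SimpleGraph.mem_edgeSet _).mp (pA.edges_subset_edgeSet hxA)
            have hxy : x ≠ y := hGxy.ne
            have hx1 := hclassA x (pA.fst_mem_support_of_mem_edges hxA)
            have hy1 := hclassA y (pA.snd_mem_support_of_mem_edges hxA)
            have hx2 := hclassB x (pB.fst_mem_support_of_mem_edges hxB)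
            have hy2 := hclassB y (pB.snd_mem_support_of_mem_edges hxB)
            have huvmem : ∀ z, (z = u ∨ z = v ∨ z ∈ A) → (z = v ∨ z = u ∨ z ∈ B) →
                z = u ∨ z = v := by
              intro z h1 h2
              rcases h1 with rfl | rfl | h1
              · exact Or.inl rfl
              · exact Or.inr rfl
              · rcases h2 with rfl | rfl | h2
                · exact Or.inr rfl
                · exact Or.inl rfl
                · exact (hAB z h1 h2).elim
            rcases huvmem x hx1 hx2 with rfl | rfl <;> rcases huvmem y hy1 hy2 with rfl | rfl
            · exact hxy rfl
            · exact hnuv hGxy.1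
            · exact hnuv hGxy.1.symm
            · exact hxy rfl
          intro e heA e' heB heq
          subst heq
          exact Sym2.ind hdisj e heA heB
        · -- ne nil
          intro h
          rw [h] at hClen
          simp at hClen
        · -- support tail nodup
          have htail : C.support.tail = pA'.support.tail ++ pB'.support.tail := by
            rw [hC]; exact SimpleGraph.Walk.tail_support_append _ _
          rw [htail, hsupA, hsupB, List.nodup_append]
          refine ⟨hndA.of_cons, hndB.of_cons, ?_⟩
          intro z hz1 z' hz2 hzz
          subst hzz
          have hzA : z ∈ pA.support := List.mem_of_mem_tail hz1
          have hzB : z ∈ pB.support := List.mem_of_mem_tail hz2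
          have hzu : z ≠ u := fun h => hutailA (h ▸ hz1)
          have hzv : z ≠ v := fun h => hvtailB (h ▸ hz2)
          rcases hclassA z hzA with rfl | rfl | hzA'
          · exact hzu rfl
          · exact hzv rfl
          · rcases hclassB z hzB with rfl | rfl | hzB'
            · exact hzv rfl
            · exact hzu rfl
            · exact hAB z hzA' hzB'
      -- apply chordality
      obtain ⟨x, y, hx, hy, hadj, hnotchord⟩ := hG C hCcyc hClen
      have memuA : u ∈ pA.support := pA.start_mem_support
      have memvA : v ∈ pA.support := pA.end_mem_support
      have memuB : u ∈ pB.support := pB.end_mem_support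
      have memvB : v ∈ pB.support := pB.start_mem_support
      have inA : ∀ z, z ∈ C.support → z ∈ A → z ∈ pA.support := by
        intro z hz hzA
        rcases hCsup z hz with h | h
        · exact h
        · rcases hclassB z h with rfl | rfl | hzB
          · exact (hvA hzA).elim
          · exact (huA hzA).elim
          · exact (hAB z hzA hzB).elim
      have inB : ∀ z, z ∈ C.support → z ∈ B → z ∈ pB.support := by
        intro z hz hzB
        rcases hCsup z hz with h | h
        · rcases hclassA z h with rfl | rfl | hzA'
          · exact (huB hzB).elim
          · exact (hvB hzB).elim
          · exact (hAB z hzA' hzB).elim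
        · exact h
      have cls : ∀ z, z ∈ C.support → z = u ∨ z = v ∨ z ∈ A ∨ z ∈ B := by
        intro z hz
        rcases hCsup z hz with h | h
        · rcases hclassA z h with h' | h' | h'
          exacts [Or.inl h', Or.inr (Or.inl h'), Or.inr (Or.inr (Or.inl h'))]
        · rcases hclassB z h with h' | h' | h'
          exacts [Or.inr (Or.inl h'), Or.inl h', Or.inr (Or.inr (Or.inr h'))]
      have hgradj : ∀ x' y', x' ∈ A → y' ∈ t' → G.Adj x' y' → y' ∈ A := by
        intro x' y' hx' hy' hadj'
        exact hAcl x' hx' y' ⟨hadj', hAt' x' hx', hy'⟩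
      have hgradjB : ∀ x' y', x' ∈ B → y' ∈ t' → G.Adj x' y' → y' ∈ B := by
        intro x' y' hx' hy' hadj'
        exact hBcl x' hx' y' ⟨hadj', hBt' x' hx', hy'⟩
      have hss : (x ∈ pA.support ∧ y ∈ pA.support) ∨ (x ∈ pB.support ∧ y ∈ pB.support) := by
        rcases cls x hx with rfl | rfl | hxA | hxB <;> rcases cls y hy with rfl | rfl | hyA | hyB
        · exact absurd hadj (G.loopless.irrefl _)
        · exact absurd hadj hnuv
        · exact Or.inl ⟨memuA, inA y hy hyA⟩
        · exact Or.inr ⟨memuB, inB y hy hyB⟩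
        · exact absurd hadj.symm hnuv
        · exact absurd hadj (G.loopless.irrefl _)
        · exact Or.inl ⟨memvA, inA y hy hyA⟩
        · exact Or.inr ⟨memvB, inB y hy hyB⟩
        · exact Or.inl ⟨inA x hx hxA, memuA⟩
        · exact Or.inl ⟨inA x hx hxA, memvA⟩
        · exact Or.inl ⟨inA x hx hxA, inA y hy hyA⟩
        · exact (hAB y (hgradj x y hxA (hBt' y hyB) hadj) hyB).elim
        · exact Or.inr ⟨inB x hx hxB, memuB⟩
        · exact Or.inr ⟨inB x hx hxB, memvB⟩
        · exact (hAB y hyA (hgradjB x y hxB (hAt' y hyA) hadj)).elim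
        · exact Or.inr ⟨inB x hx hxB, inB y hy hyB⟩
      apply hnotchord
      rw [hCedges]
      rcases hss with ⟨hx', hy'⟩ | ⟨hx', hy'⟩
      · exact List.mem_append_left _ (hchordA x y hx' hy' hadj)
      · exact List.mem_append_right _ (hchordB x y hx' hy' hadj)
    -- final step
    have final : ∀ (A' : Set V) (r w : V), r ∈ A' → w ∈ t → w ∉ A' → w ∉ S →
        (∀ z ∈ A', z ∈ t') → (∀ x ∈ A', ∀ y, G.Adj x y → y ∈ t' → y ∈ A') →
        (∀ kk ∈ K, kk ∉ A') →
        ∃ x ∈ t, x ∉ K ∧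
          ∀ y z : V, G.Adj x y → y ∈ t → G.Adj x z → z ∈ t → y ≠ z → G.Adj y z := by
      intro A' r w hr hwt hwA hwS hA't hA'cl hKA
      have ht₁t : A' ∪ S ⊆ t := by
        intro z hz
        rcases hz with hz | hz
        · exact (hA't z hz).1
        · exact hSt hz
      have hwt₁ : w ∉ A' ∪ S := fun h => by rcases h with h | h; exacts [hwA h, hwS h]
      have hsub : A' ∪ S ⊂ t := ⟨ht₁t, fun hh => hwt₁ (hh hwt)⟩
      have hcard : (A' ∪ S).ncard ≤ n := by
        have h1 := Set.ncard_lt_ncard hsub (Set.toFinite t)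
        omega
      have hrS : r ∉ S := fun h => (hA't r hr).2 h
      have hSne : S ≠ A' ∪ S := fun h => hrS (by rw [h]; exact Or.inl hr)
      obtain ⟨x, hxt₁, hxS, hxprop⟩ := IH (A' ∪ S) hcard S (fun z hz => Or.inr hz)
        (fun y hy z hz => hSclq y hy z hz) hSne
      have hxA' : x ∈ A' := by
        rcases hxt₁ with h | h
        · exact h
        · exact absurd h hxS
      refine ⟨x, ht₁t hxt₁, fun h => hKA x h hxA', ?_⟩
      intro y z hxy hyt hxz hzt hyz
      have hyt₁ : y ∈ A' ∪ S := by
        by_cases hyS : y ∈ S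
        · exact Or.inr hyS
        · exact Or.inl (hA'cl x hxA' y hxy ⟨hyt, hyS⟩)
      have hzt₁ : z ∈ A' ∪ S := by
        by_cases hzS : z ∈ S
        · exact Or.inr hzS
        · exact Or.inl (hA'cl x hxA' z hxz ⟨hzt, hzS⟩)
      exact hxprop y z hxy hyt₁ hxz hzt₁ hyz
    by_cases hKA : ∀ kk ∈ K, kk ∉ A
    · exact final A a b haA hbt (fun h => hAB b h hbB) hbS hAt'
        (fun x hx y hxy hyt => hAcl x hx y ⟨hxy, hAt' x hx, hyt⟩) hKA
    · push_neg at hKA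
      obtain ⟨k, hkK, hkA⟩ := hKA
      have hKB : ∀ kk ∈ K, kk ∉ B := by
        intro kk hkk hkkB
        have hnekk : k ≠ kk := fun h => hAB k hkA (h ▸ hkkB)
        have hadjk : G.Adj k kk := hKcl k hkK kk hkk hnekk
        exact hAB kk (hAcl k hkA kk ⟨hadjk, hAt' k hkA, hBt' kk hkkB⟩) hkkB
      exact final B b a hbB hat (fun h => hAB a haA h) haS hBt'
        (fun x hx y hxy hyt => hBcl x hx y ⟨hxy, hBt' x hx, hyt⟩) hKB


end ChordalAux

/-- In a chordal graph, for any proper complete subgraph `K` there is a vertex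
outside `K` whose neighborhood is a clique; hence its closed neighborhood is a clique. -/
theorem chordal_exists_simplicial_vertex {V : Type*} [Fintype V] (G : SimpleGraph V)
    (hG : G.IsChordal) (K : Set V) (hK : G.IsClique K) (hKne : K ≠ Set.univ) :
    ∃ x : V, x ∉ K ∧ G.IsClique (G.neighborSet x) ∧
      G.IsClique (insert x (G.neighborSet x)) := by
  classical
  obtain ⟨x, _, hxK, hx⟩ := main_ind G hG (Set.ncard (Set.univ : Set V)) Set.univ le_rfl K
    (Set.subset_univ K) (fun y hy z hz hyz => hK hy hz hyz) hKne
  have hNcl : G.IsClique (G.neighborSet x) := by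
    intro y hy z hz hyz
    exact hx y z hy (Set.mem_univ y) hz (Set.mem_univ z) hyz
  refine ⟨x, hxK, hNcl, hNcl.insert ?_⟩
  intro b hb _
  exact hb
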